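/- Let N, M, n be positive integers with M ≤ N and n ≤ N, let V be a set of size N, and let F ⊆ V with |F| = M. Let S be a uniformly random n-element subset of V and let H = |S ∩ F| (so H is a hypergeometric random variable counting successes in n draws without replacement from a population of N containing M successes). Then for every real t ≥ 0, the probability that H ≥ (M/N + t)·n is at most exp(−2t²n). -/

import Mathlib

open scoped Classical

/-- The probability of the event `p` under the uniform distribution on the finite
sample space `Ω`. -/
noncomputable def probOf {β : Type*} (Ω : Finset β) (p : β → Prop) : ℝ :=
  ((Ω.filter p).card : ℝ) / (Ω.card : ℝ)

/-- Hypergeometric right tail bound: if `S` is a uniformly random `n`-element subset of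
an `N`-element set `V` and `F ⊆ V` has `M` elements, then for `t ≥ 0` the probability
that `|S ∩ F| ≥ (M/N + t) n` is at most `exp (-2 t² n)`. -/

lemma amgm_pow (y : ℝ) (hy : 0 ≤ y) (i : ℕ) :
    (1 + y) ^ i ≤ (1 + y * i / (i + 1)) ^ (i + 1) := by
  have hi1 : (0:ℝ) < (i:ℝ) + 1 := by positivity
  have h := Real.geom_mean_le_arith_mean2_weighted
    (w₁ := (i:ℝ)/((i:ℝ)+1)) (w₂ := 1/((i:ℝ)+1)) (p₁ := 1 + y) (p₂ := 1)
    (by positivity) (by positivity) (by linarith) (by norm_num)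
    (by field_simp)
  rw [Real.one_rpow, mul_one, mul_one] at h
  have hrhs : (i:ℝ)/((i:ℝ)+1) * (1+y) + 1/((i:ℝ)+1) = 1 + y * i / (i+1) := by
    field_simp; ring
  rw [hrhs] at h
  have h2 : ((1+y) ^ ((i:ℝ)/((i:ℝ)+1))) ^ ((i:ℝ)+1) ≤ (1 + y * i / (i+1)) ^ ((i:ℝ)+1) := by
    apply Real.rpow_le_rpow (by positivity) h (by positivity)
  rw [← Real.rpow_mul (by linarith), div_mul_cancel₀ _ (ne_of_gt hi1)] at h2
  calc (1+y) ^ i = (1+y) ^ ((i:ℝ)) := (Real.rpow_natCast _ i).symm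
    _ ≤ (1 + y * i / (i+1)) ^ (((i:ℝ)+1)) := h2
    _ = (1 + y * i / (i+1)) ^ (i+1) := by
        rw [← Real.rpow_natCast (1 + y * i / (i+1)) (i+1)]; push_cast; ring_nf


lemma hoeffding_scalar (p l : ℝ) (hp0 : 0 ≤ p) (hp1 : p ≤ 1) (hl : 0 ≤ l) :
    1 - p + p * Real.exp l ≤ Real.exp (p * l + l ^ 2 / 8) := by
  set q := 1 - p with hq
  have hq0 : 0 ≤ q := by simp [hq]; linarith
  clear_value q
  have hfpos : ∀ y : ℝ, 0 < q + p * Real.exp y := by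
    intro y
    rcases eq_or_lt_of_le hp0 with h | h
    · simp [← h]; linarith
    · have := Real.exp_pos y; positivity
  set G : ℝ → ℝ := fun y => p + y / 4 - p * Real.exp y / (q + p * Real.exp y) with hG
  have hden : ∀ y : ℝ, HasDerivAt (fun y => q + p * Real.exp y) (p * Real.exp y) y := by
    intro y
    exact ((Real.hasDerivAt_exp y).const_mul p).const_add q
  have hGd : ∀ y : ℝ, HasDerivAt G
      (1 / 4 - q * (p * Real.exp y) / (q + p * Real.exp y) ^ 2) y := by
    intro y
    have he : HasDerivAt (fun y => p * Real.exp y) (p * Real.exp y) y :=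
      (Real.hasDerivAt_exp y).const_mul p
    have hdiv := he.div (hden y) (ne_of_gt (hfpos y))
    have h1 : HasDerivAt (fun y => p + y / 4) (1/4) y := by
      simpa using ((hasDerivAt_id y).div_const 4).const_add p
    have := h1.sub hdiv
    refine this.congr_deriv ?_
    congr 2
    ring
  have hGmono : Monotone G := by
    apply monotone_of_deriv_nonneg
    · intro y; exact (hGd y).differentiableAt
    · intro y
      rw [(hGd y).deriv]
      have h4 : 4 * (q * (p * Real.exp y)) ≤ (q + p * Real.exp y) ^ 2 := by
        nlinarith [sq_nonneg (q - p * Real.exp y)]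
      have hsq : (0:ℝ) < (q + p * Real.exp y) ^ 2 := pow_pos (hfpos y) 2
      rw [sub_nonneg, div_le_iff₀ hsq]
      nlinarith [h4, hsq]
  have hG0 : G 0 = 0 := by simp [hG, hq]
  have hGnonneg : ∀ y : ℝ, 0 ≤ y → 0 ≤ G y := by
    intro y hy; rw [← hG0]; exact hGmono hy
  set g : ℝ → ℝ := fun y => p * y + y ^ 2 / 8 - Real.log (q + p * Real.exp y) with hgdef
  have hgd : ∀ y : ℝ, HasDerivAt g (G y) y := by
    intro y
    have hlog : HasDerivAt (fun y => Real.log (q + p * Real.exp y))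
        (p * Real.exp y / (q + p * Real.exp y)) y := (hden y).log (ne_of_gt (hfpos y))
    have h1 : HasDerivAt (fun y : ℝ => p * y + y ^ 2 / 8) (p + y / 4) y := by
      have h := ((hasDerivAt_id y).const_mul p).add ((hasDerivAt_pow 2 y).div_const 8)
      simp only [id] at h
      refine h.congr_deriv ?_
      show p * 1 + ((2:ℕ):ℝ) * y ^ 1 / 8 = p + y / 4
      push_cast; ring
    exact h1.sub hlog
  have hgmono : MonotoneOn g (Set.Ici (0:ℝ)) := by
    apply monotoneOn_of_deriv_nonneg (convex_Ici 0)
    · exact fun y _ => ((hgd y).differentiableAt).continuousAt.continuousWithinAt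
    · exact fun y _ => ((hgd y).differentiableAt).differentiableWithinAt
    · intro y hy
      rw [(hgd y).deriv]
      exact hGnonneg y (le_of_lt (by simpa using hy))
  have hg0 : g 0 = 0 := by simp [hgdef, hq]
  have hgl : 0 ≤ g l := by
    rw [← hg0]
    exact hgmono (Set.self_mem_Ici) (Set.mem_Ici.mpr hl) hl
  have : Real.log (q + p * Real.exp l) ≤ p * l + l ^ 2 / 8 := by
    simp only [hgdef] at hgl; linarith
  calc q + p * Real.exp l = Real.exp (Real.log (q + p * Real.exp l)) :=
        (Real.exp_log (hfpos l)).symm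
    _ ≤ Real.exp (p * l + l ^ 2 / 8) := Real.exp_le_exp.mpr this

lemma step_real (N M n : ℕ) (hMN : M ≤ N) (hn : n + 1 ≤ N) (x : ℝ) (hx : 1 ≤ x) :
    (M:ℝ) * x * (1 + ((M:ℝ) - 1) * ((x - 1) / ((N:ℝ) - 1))) ^ n
      + ((N:ℝ) - (M:ℝ)) * (1 + (M:ℝ) * ((x - 1) / ((N:ℝ) - 1))) ^ n
    ≤ (N:ℝ) * (1 + (M:ℝ) / (N:ℝ) * (x - 1)) ^ (n + 1) := by
  have hN1 : 1 ≤ N := le_trans (Nat.le_add_left 1 n) hn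
  have hNr1 : (1:ℝ) ≤ (N:ℝ) := by exact_mod_cast hN1
  have hNr0 : (0:ℝ) < (N:ℝ) := by linarith
  rcases Nat.eq_zero_or_pos M with hM0 | hM1
  · subst hM0
    simp only [Nat.cast_zero, zero_mul, zero_div, zero_add, sub_zero, mul_zero, add_zero,
      one_pow, mul_one]
    norm_num
  rcases Nat.eq_zero_or_pos n with hn0 | hn1
  · subst hn0
    simp only [pow_zero, mul_one, pow_one]
    have : (N:ℝ) ≠ 0 := ne_of_gt hNr0
    field_simp
    rw [zero_add, pow_one, mul_div_cancel₀ _ this]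
    linarith
  -- now M ≥ 1, n ≥ 1, N ≥ n+1 ≥ 2
  have hN2 : 2 ≤ N := le_trans (by omega) hn
  have hNr2 : (2:ℝ) ≤ (N:ℝ) := by exact_mod_cast hN2
  have hMr1 : (1:ℝ) ≤ (M:ℝ) := by exact_mod_cast hM1
  have hMrN : (M:ℝ) ≤ (N:ℝ) := by exact_mod_cast hMN
  set d : ℝ := (x - 1) / ((N:ℝ) - 1) with hd_def
  have hd0 : 0 ≤ d := by
    apply div_nonneg <;> linarith
  have hNe : (N:ℝ) - 1 ≠ 0 := by linarith
  have hd : ((N:ℝ) - 1) * d = x - 1 := by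
    rw [hd_def]; field_simp
  set A : ℝ := 1 + ((M:ℝ) - 1) * d with hA_def
  set B : ℝ := 1 + (M:ℝ) * d with hB_def
  set C : ℝ := 1 + (M:ℝ) / (N:ℝ) * (x - 1) with hC_def
  set q : ℝ := ((N:ℝ) - (M:ℝ)) / (N:ℝ) with hq_def
  have hq0 : 0 ≤ q := by apply div_nonneg <;> linarith
  have hA1 : 1 ≤ A := by
    rw [hA_def]; nlinarith
  have hBA : B = A + d := by rw [hB_def, hA_def]; ring
  have hCA : C = A + q * d := by
    rw [hC_def, hA_def, hq_def, ← hd]; field_simp; ring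
  have hC' : C = 1 + (M:ℝ) * d * (((N:ℝ) - 1) / (N:ℝ)) := by
    rw [hC_def, ← hd]; field_simp
  have hMx : (M:ℝ) * x = (N:ℝ) * (C - q) := by
    rw [hC_def, hq_def]; field_simp; ring
  have hNM : (N:ℝ) - (M:ℝ) = (N:ℝ) * q := by
    rw [hq_def]; field_simp
  -- termwise bound
  have hterm : ∀ i ∈ Finset.range n, B ^ i ≤ C ^ (i + 1) := by
    intro i hi
    have hi' : (i:ℝ) + 2 ≤ (N:ℝ) := by
      have : i + 2 ≤ N := by
        have := Finset.mem_range.mp hi; omega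
      exact_mod_cast this
    have hy0 : 0 ≤ (M:ℝ) * d := by positivity
    have h1 := amgm_pow ((M:ℝ) * d) hy0 i
    rw [hB_def]
    refine h1.trans ?_
    have hfrac : (i:ℝ) / ((i:ℝ) + 1) ≤ ((N:ℝ) - 1) / (N:ℝ) := by
      rw [div_le_div_iff₀ (by positivity) hNr0]
      nlinarith
    have hbase : 1 + (M:ℝ) * d * (i:ℝ) / ((i:ℝ) + 1) ≤ C := by
      rw [hC']
      have : (M:ℝ) * d * (i:ℝ) / ((i:ℝ) + 1) = (M:ℝ) * d * ((i:ℝ) / ((i:ℝ) + 1)) := by ring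
      rw [this]
      have := mul_le_mul_of_nonneg_left hfrac hy0
      linarith
    apply pow_le_pow_left₀ (by positivity) hbase
  clear_value d A B C q
  -- key identity
  have key : C ^ (n + 1) - ((C - q) * A ^ n + q * B ^ n)
      = q * d * ∑ i ∈ Finset.range n, (C ^ (i + 1) - B ^ i) * A ^ (n - 1 - i) := by
    have h1 := geom_sum₂_mul C A n
    have h2 := geom_sum₂_mul B A n
    have hCmA : C - A = q * d := by rw [hCA]; ring
    have hBmA : B - A = d := by rw [hBA]; ring
    rw [hCmA] at h1
    rw [hBmA] at h2
    have expand : ∑ i ∈ Finset.range n, (C ^ (i + 1) - B ^ i) * A ^ (n - 1 - i)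
        = C * ∑ i ∈ Finset.range n, C ^ i * A ^ (n - 1 - i)
          - ∑ i ∈ Finset.range n, B ^ i * A ^ (n - 1 - i) := by
      rw [Finset.mul_sum, ← Finset.sum_sub_distrib]
      apply Finset.sum_congr rfl
      intro i _
      ring
    rw [expand]
    calc C ^ (n + 1) - ((C - q) * A ^ n + q * B ^ n)
        = C * (C ^ n - A ^ n) - q * (B ^ n - A ^ n) := by ring
      _ = C * ((∑ i ∈ Finset.range n, C ^ i * A ^ (n - 1 - i)) * (q * d))
            - q * ((∑ i ∈ Finset.range n, B ^ i * A ^ (n - 1 - i)) * d) := by rw [h1, h2]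
      _ = q * d * (C * ∑ i ∈ Finset.range n, C ^ i * A ^ (n - 1 - i)
            - ∑ i ∈ Finset.range n, B ^ i * A ^ (n - 1 - i)) := by ring
  have hsum : 0 ≤ ∑ i ∈ Finset.range n, (C ^ (i + 1) - B ^ i) * A ^ (n - 1 - i) := by
    apply Finset.sum_nonneg
    intro i hi
    have := hterm i hi
    have hApow : (0:ℝ) ≤ A ^ (n - 1 - i) := by positivity
    nlinarith
  have hmain : (C - q) * A ^ n + q * B ^ n ≤ C ^ (n + 1) := by
    have h0 : 0 ≤ q * d * ∑ i ∈ Finset.range n, (C ^ (i + 1) - B ^ i) * A ^ (n - 1 - i) :=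
      mul_nonneg (mul_nonneg hq0 hd0) hsum
    linarith [key]
  calc (M:ℝ) * x * A ^ n + ((N:ℝ) - (M:ℝ)) * B ^ n
      = (N:ℝ) * ((C - q) * A ^ n + q * B ^ n) := by rw [hMx, hNM]; ring
    _ ≤ (N:ℝ) * C ^ (n + 1) := by
        apply mul_le_mul_of_nonneg_left hmain (le_of_lt hNr0)



variable {α : Type} [DecidableEq α]

lemma inner_bij (x : ℝ) (V F : Finset α) (n : ℕ) (v : α) (hv : v ∈ V) :
    ∑ S ∈ (Finset.powersetCard (n+1) V).filter (fun S => v ∈ S), x ^ (S ∩ F).card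
      = (if v ∈ F then x else 1) *
          ∑ T ∈ Finset.powersetCard n (V.erase v), x ^ (T ∩ F.erase v).card := by
  rw [Finset.mul_sum]
  refine Finset.sum_bij' (i := fun S _ => S.erase v) (j := fun T _ => insert v T)
    ?_ ?_ ?_ ?_ ?_
  · intro S hS
    rw [Finset.mem_filter, Finset.mem_powersetCard] at hS
    obtain ⟨⟨hSV, hScard⟩, hvS⟩ := hS
    rw [Finset.mem_powersetCard]
    exact ⟨Finset.erase_subset_erase v hSV, by rw [Finset.card_erase_of_mem hvS, hScard]; omega⟩
  · intro T hT
    rw [Finset.mem_powersetCard] at hT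
    obtain ⟨hTV, hTcard⟩ := hT
    have hvT : v ∉ T := fun h => (Finset.mem_erase.mp (hTV h)).1 rfl
    rw [Finset.mem_filter, Finset.mem_powersetCard]
    refine ⟨⟨Finset.insert_subset hv (hTV.trans (Finset.erase_subset v V)), ?_⟩,
      Finset.mem_insert_self v T⟩
    rw [Finset.card_insert_of_notMem hvT, hTcard]
  · intro S hS
    rw [Finset.mem_filter] at hS
    exact Finset.insert_erase hS.2
  · intro T hT
    rw [Finset.mem_powersetCard] at hT
    have hvT : v ∉ T := fun h => (Finset.mem_erase.mp (hT.1 h)).1 rfl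
    exact Finset.erase_insert hvT
  · intro S hS
    rw [Finset.mem_filter] at hS
    obtain ⟨_, hvS⟩ := hS
    have hinter : S.erase v ∩ F.erase v = (S ∩ F).erase v := by
      rw [Finset.erase_inter, Finset.inter_erase, Finset.erase_idem]
    rw [hinter]
    by_cases hvF : v ∈ F
    · have hvSF : v ∈ S ∩ F := Finset.mem_inter.mpr ⟨hvS, hvF⟩
      rw [if_pos hvF, Finset.card_erase_of_mem hvSF]
      have hpos : (S ∩ F).card ≠ 0 := Finset.card_ne_zero_of_mem hvSF
      conv_lhs => rw [← Nat.succ_pred_eq_of_pos (Nat.pos_of_ne_zero hpos)]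
      rw [pow_succ, Nat.pred_eq_sub_one]
      ring
    · have : v ∉ S ∩ F := fun h => hvF (Finset.mem_inter.mp h).2
      rw [if_neg hvF, Finset.erase_eq_of_notMem this, one_mul]

lemma Z_rec (x : ℝ) (V F : Finset α) (n : ℕ) :
    ((n+1 : ℕ) : ℝ) * ∑ S ∈ Finset.powersetCard (n+1) V, x ^ (S ∩ F).card
      = ∑ v ∈ V, (if v ∈ F then x else 1) *
          ∑ T ∈ Finset.powersetCard n (V.erase v), x ^ (T ∩ F.erase v).card := by
  have lhs_eq : ((n+1 : ℕ) : ℝ) * ∑ S ∈ Finset.powersetCard (n+1) V, x ^ (S ∩ F).card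
      = ∑ S ∈ Finset.powersetCard (n+1) V, ∑ v ∈ V,
          (if v ∈ S then x ^ (S ∩ F).card else 0) := by
    rw [Finset.mul_sum]
    apply Finset.sum_congr rfl
    intro S hS
    rw [Finset.mem_powersetCard] at hS
    rw [Finset.sum_ite_mem, Finset.inter_eq_right.mpr hS.1, Finset.sum_const,
      nsmul_eq_mul, hS.2]
  rw [lhs_eq, Finset.sum_comm]
  apply Finset.sum_congr rfl
  intro v hv
  rw [← inner_bij x V F n v hv, Finset.sum_filter]

lemma Z_le (x : ℝ) (hx : 1 ≤ x) (n : ℕ) :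
    ∀ (V F : Finset α), F ⊆ V → n ≤ V.card →
    ∑ S ∈ Finset.powersetCard n V, x ^ (S ∩ F).card
      ≤ (V.card.choose n : ℝ) * (1 + (F.card : ℝ) / (V.card : ℝ) * (x - 1)) ^ n := by
  have hx0 : (0:ℝ) < x := lt_of_lt_of_le one_pos hx
  induction n with
  | zero => intro V F hFV _; simp
  | succ n ih =>
    intro V F hFV hn
    have hMN : F.card ≤ V.card := Finset.card_le_card hFV
    have hNpos : 0 < V.card := lt_of_lt_of_le (Nat.succ_pos n) hn
    set N := V.card with hN
    set M := F.card with hM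
    set A : ℝ := 1 + ((M:ℝ) - 1) * ((x - 1) / ((N:ℝ) - 1)) with hA_def
    set B : ℝ := 1 + (M:ℝ) * ((x - 1) / ((N:ℝ) - 1)) with hB_def
    have hcastN : ((N - 1 : ℕ) : ℝ) = (N:ℝ) - 1 := by
      rw [Nat.cast_sub hNpos]; norm_num
    -- bound for v ∈ F
    have hbF : ∀ v ∈ F, ∑ T ∈ Finset.powersetCard n (V.erase v), x ^ (T ∩ F.erase v).card
        ≤ ((N-1).choose n : ℝ) * A ^ n := by
      intro v hv
      have hvV : v ∈ V := hFV hv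
      have h1 : (V.erase v).card = N - 1 := by rw [Finset.card_erase_of_mem hvV]
      have h2 : (F.erase v).card = M - 1 := by rw [Finset.card_erase_of_mem hv]
      have hsub : F.erase v ⊆ V.erase v := Finset.erase_subset_erase v hFV
      have hle : n ≤ (V.erase v).card := by rw [h1]; omega
      have := ih (V.erase v) (F.erase v) hsub hle
      rw [h1, h2] at this
      have hMpos : 0 < M := Finset.card_pos.mpr ⟨v, hv⟩
      have hcastM : ((M - 1 : ℕ) : ℝ) = (M:ℝ) - 1 := by
        rw [Nat.cast_sub hMpos]; norm_num
      rw [hcastN, hcastM] at this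
      refine this.trans (le_of_eq ?_)
      rw [hA_def]; ring_nf
    -- bound for v ∈ V \ F
    have hbVF : ∀ v ∈ V \ F, ∑ T ∈ Finset.powersetCard n (V.erase v), x ^ (T ∩ F.erase v).card
        ≤ ((N-1).choose n : ℝ) * B ^ n := by
      intro v hv
      rw [Finset.mem_sdiff] at hv
      obtain ⟨hvV, hvF⟩ := hv
      have h1 : (V.erase v).card = N - 1 := by rw [Finset.card_erase_of_mem hvV]
      have h2 : F.erase v = F := Finset.erase_eq_of_notMem hvF
      have hsub : F.erase v ⊆ V.erase v := by
        rw [h2, Finset.subset_erase]; exact ⟨hFV, hvF⟩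
      have hle : n ≤ (V.erase v).card := by rw [h1]; omega
      have := ih (V.erase v) (F.erase v) hsub hle
      rw [h1, h2, hcastN] at this
      rw [h2]
      refine this.trans (le_of_eq ?_)
      rw [hB_def, ← hM]; ring_nf
    -- the recursion
    have hrec := Z_rec x V F n
    have hchoosepos : (0:ℝ) ≤ ((N-1).choose n : ℝ) := Nat.cast_nonneg _
    have hsplit : ∑ v ∈ V, (if v ∈ F then x else 1) *
          ∑ T ∈ Finset.powersetCard n (V.erase v), x ^ (T ∩ F.erase v).card
        ≤ (M:ℝ) * (x * (((N-1).choose n : ℝ) * A ^ n))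
          + (((N:ℝ) - (M:ℝ)) * (((N-1).choose n : ℝ) * B ^ n)) := by
      rw [← Finset.sum_sdiff hFV]
      have e1 : ∑ v ∈ F, (if v ∈ F then x else 1) *
            ∑ T ∈ Finset.powersetCard n (V.erase v), x ^ (T ∩ F.erase v).card
          ≤ (M:ℝ) * (x * (((N-1).choose n : ℝ) * A ^ n)) := by
        have := Finset.sum_le_card_nsmul F (fun v => (if v ∈ F then x else 1) *
            ∑ T ∈ Finset.powersetCard n (V.erase v), x ^ (T ∩ F.erase v).card)
            (x * (((N-1).choose n : ℝ) * A ^ n)) ?_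
        · rw [← hM] at this
          simpa [nsmul_eq_mul] using this
        · intro v hv
          rw [if_pos hv]
          exact mul_le_mul_of_nonneg_left (hbF v hv) (le_of_lt hx0)
      have e2 : ∑ v ∈ V \ F, (if v ∈ F then x else 1) *
            ∑ T ∈ Finset.powersetCard n (V.erase v), x ^ (T ∩ F.erase v).card
          ≤ ((N:ℝ) - (M:ℝ)) * (((N-1).choose n : ℝ) * B ^ n) := by
        have := Finset.sum_le_card_nsmul (V \ F) (fun v => (if v ∈ F then x else 1) *
            ∑ T ∈ Finset.powersetCard n (V.erase v), x ^ (T ∩ F.erase v).card)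
            ((((N-1).choose n : ℝ)) * B ^ n) ?_
        · have hcard : (V \ F).card = N - M := by
            rw [Finset.card_sdiff_of_subset hFV]
          rw [hcard] at this
          have : ((N - M : ℕ) : ℝ) * (((N-1).choose n : ℝ) * B ^ n)
              ≥ ∑ v ∈ V \ F, (if v ∈ F then x else 1) *
                ∑ T ∈ Finset.powersetCard n (V.erase v), x ^ (T ∩ F.erase v).card := by
            simpa [nsmul_eq_mul] using this
          rw [Nat.cast_sub hMN] at this
          linarith
        · intro v hv
          rw [if_neg (Finset.mem_sdiff.mp hv).2, one_mul]
          exact hbVF v hv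
      linarith
    -- step inequality
    have hstep := step_real N M n hMN hn x hx
    -- combine
    have hcomb : ((n+1 : ℕ) : ℝ) * ∑ S ∈ Finset.powersetCard (n+1) V, x ^ (S ∩ F).card
        ≤ ((N-1).choose n : ℝ) * ((N:ℝ) * (1 + (M:ℝ) / (N:ℝ) * (x - 1)) ^ (n + 1)) := by
      rw [hrec]
      refine hsplit.trans ?_
      have := mul_le_mul_of_nonneg_left hstep hchoosepos
      rw [hA_def, hB_def]
      calc (M:ℝ) * (x * (((N-1).choose n : ℝ) * A ^ n))
            + ((N:ℝ) - (M:ℝ)) * (((N-1).choose n : ℝ) * B ^ n)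
          = ((N-1).choose n : ℝ) * ((M:ℝ) * x * A ^ n + ((N:ℝ) - (M:ℝ)) * B ^ n) := by ring
        _ ≤ _ := by
            rw [hA_def, hB_def]
            exact mul_le_mul_of_nonneg_left hstep hchoosepos
    -- choose identity
    have hid : (N:ℝ) * ((N-1).choose n : ℝ) = ((n:ℝ) + 1) * (N.choose (n+1) : ℝ) := by
      have h := Nat.add_one_mul_choose_eq (N-1) n
      have hN' : N - 1 + 1 = N := by omega
      rw [hN'] at h
      have : ((N * (N-1).choose n : ℕ) : ℝ) = ((N.choose (n+1) * (n+1) : ℕ) : ℝ) := by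
        exact_mod_cast congrArg (Nat.cast : ℕ → ℝ) h
      push_cast at this
      linarith
    have hn1pos : (0:ℝ) < ((n+1 : ℕ) : ℝ) := by positivity
    have final : ((n+1 : ℕ) : ℝ) * ∑ S ∈ Finset.powersetCard (n+1) V, x ^ (S ∩ F).card
        ≤ ((n+1 : ℕ) : ℝ) * ((N.choose (n+1) : ℝ) * (1 + (M:ℝ) / (N:ℝ) * (x - 1)) ^ (n + 1)) := by
      refine hcomb.trans (le_of_eq ?_)
      have : ((n+1 : ℕ) : ℝ) = (n:ℝ) + 1 := by push_cast; ring
      rw [this]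
      linear_combination ((1 + (M:ℝ) / (N:ℝ) * (x - 1)) ^ (n + 1)) * hid
    exact le_of_mul_le_mul_left (by simpa using final) hn1pos


theorem hypergeometric_right_tail {α : Type} [DecidableEq α] (N M n : ℕ)
    (hN : 0 < N) (hM : 0 < M) (hn : 0 < n) (hMN : M ≤ N) (hnN : n ≤ N)
    (V F : Finset α) (hV : V.card = N) (hFV : F ⊆ V) (hF : F.card = M)
    (t : ℝ) (ht : 0 ≤ t) :
    probOf (Finset.powersetCard n V)
        (fun S => ((M : ℝ) / (N : ℝ) + t) * (n : ℝ) ≤ ((S ∩ F).card : ℝ))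
      ≤ Real.exp (-2 * t ^ 2 * (n : ℝ)) := by
  have hNr0 : (0:ℝ) < (N:ℝ) := by exact_mod_cast hN
  set p : ℝ := (M:ℝ)/(N:ℝ) with hp_def
  have hp0 : 0 ≤ p := by positivity
  have hp1 : p ≤ 1 := by
    rw [hp_def, div_le_one hNr0]; exact_mod_cast hMN
  set l : ℝ := 4*t with hl_def
  have hl0 : 0 ≤ l := by rw [hl_def]; positivity
  set x : ℝ := Real.exp l with hx_def
  have hx1 : (1:ℝ) ≤ x := Real.one_le_exp hl0
  have hx0 : (0:ℝ) < x := Real.exp_pos l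
  have hZ := Z_le x hx1 n V F hFV (by rw [hV]; exact hnN)
  rw [hV, hF, ← hp_def] at hZ
  set a : ℝ := (p + t) * n with ha_def
  have hcard : ((Finset.powersetCard n V).card : ℝ) = (N.choose n : ℝ) := by
    rw [Finset.card_powersetCard, hV]
  have hchoose_pos : (0:ℝ) < (N.choose n : ℝ) := by exact_mod_cast Nat.choose_pos hnN
  simp only [probOf]
  rw [hcard]
  set E := (Finset.powersetCard n V).filter
    (fun S => (p + t) * (n:ℝ) ≤ ((S ∩ F).card : ℝ)) with hE_def
  have hmarkov : (E.card : ℝ) * x ^ a ≤ ∑ S ∈ Finset.powersetCard n V, x ^ (S ∩ F).card := by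
    have step1 : (E.card : ℝ) * x ^ a = ∑ _S ∈ E, x ^ a := by
      rw [Finset.sum_const, nsmul_eq_mul]
    rw [step1]
    have step2 : ∑ S ∈ E, x ^ a ≤ ∑ S ∈ E, x ^ (S ∩ F).card := by
      apply Finset.sum_le_sum
      intro S hS
      rw [hE_def, Finset.mem_filter] at hS
      have hcond : a ≤ (((S ∩ F).card : ℕ) : ℝ) := hS.2
      have h := Real.rpow_le_rpow_of_exponent_le hx1 hcond
      rwa [Real.rpow_natCast] at h
    refine step2.trans ?_
    apply Finset.sum_le_sum_of_subset_of_nonneg (Finset.filter_subset _ _)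
    intro S _ _
    positivity
  have hbern : 1 + p*(x-1) ≤ Real.exp (p*l + l^2/8) := by
    have h := hoeffding_scalar p l hp0 hp1 hl0
    have e : 1 + p*(x-1) = 1 - p + p * Real.exp l := by rw [hx_def]; ring
    rw [e]; exact h
  have hbase0 : (0:ℝ) ≤ 1 + p*(x-1) := by nlinarith
  have hpow : (1 + p*(x-1))^n ≤ Real.exp ((n:ℝ)*(p*l + l^2/8)) := by
    calc (1 + p*(x-1))^n ≤ (Real.exp (p*l + l^2/8))^n := pow_le_pow_left₀ hbase0 hbern n
      _ = Real.exp ((n:ℝ)*(p*l + l^2/8)) := (Real.exp_nat_mul _ n).symm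
  have hxa : x ^ a = Real.exp (l * a) := by
    rw [Real.rpow_def_of_pos hx0, hx_def, Real.log_exp]
  have key : (E.card : ℝ) * Real.exp (l*a) ≤ (N.choose n : ℝ) * Real.exp ((n:ℝ)*(p*l+l^2/8)) := by
    calc (E.card : ℝ) * Real.exp (l*a) = (E.card : ℝ) * x ^ a := by rw [hxa]
      _ ≤ ∑ S ∈ Finset.powersetCard n V, x ^ (S ∩ F).card := hmarkov
      _ ≤ (N.choose n : ℝ) * (1 + p*(x-1))^n := by
          refine hZ.trans (le_of_eq ?_); ring_nf
      _ ≤ (N.choose n : ℝ) * Real.exp ((n:ℝ)*(p*l+l^2/8)) :=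
          mul_le_mul_of_nonneg_left hpow (le_of_lt hchoose_pos)
  have hexp_pos : (0:ℝ) < Real.exp (l*a) := Real.exp_pos _
  have hexpo : (n:ℝ)*(p*l + l^2/8) - l*a = -2*t^2*(n:ℝ) := by
    rw [ha_def, hl_def]; ring
  rw [div_le_iff₀ hchoose_pos]
  have hfin : (E.card : ℝ) ≤ (N.choose n : ℝ) * Real.exp ((n:ℝ)*(p*l+l^2/8) - l*a) := by
    rw [Real.exp_sub, ← mul_div_assoc, le_div_iff₀ hexp_pos]
    exact key
  rw [hexpo] at hfin
  linarith
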